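/- Let C ⊆ 𝔽₂^N be a binary linear code and let C_x := {((−1)^{c_0},…,(−1)^{c_{N−1}}) : c ∈ C} ⊆ {±1}^N be its BPSK image. Let X be uniformly distributed on C_x, let Z = (Z_0,…,Z_{N−1}) be a real random vector independent of X with independent components, and let Y = X ⊙ Z (entrywise product). Fix i ∈ {0,…,N−1} and S ⊆ {0,…,N−1}, and let f be a measurable function with f(Y_S) = E[X_i | Y_S] almost surely. Then for every x ∈ C_x, f(Y_S) = x_i · f(x_S ⊙ Y_S) almost surely; in particular, f(Y_S) = X_i · f(Z_S) almost surely. -/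

import Mathlib

open MeasureTheory ProbabilityTheory

noncomputable section

/-- The binary entropy function (base 2). -/
def hb (p : ℝ) : ℝ := -(p * Real.logb 2 p) - (1 - p) * Real.logb 2 (1 - p)

/-- Conditional expectation `E[X | W]` of `X` given the σ-algebra generated by `W`. -/
def condMean {Ω β E : Type*} [MeasurableSpace Ω] [MeasurableSpace β]
    [NormedAddCommGroup E] [NormedSpace ℝ E] [CompleteSpace E]
    (μ : Measure Ω) (X : Ω → E) (W : Ω → β) : Ω → E :=
  μ[X | MeasurableSpace.comap W inferInstance]

/-- Bit-error probability of the MAP decision rule for `X ∈ {±1}` given `W`. -/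
def BER {Ω β : Type*} [MeasurableSpace Ω] [MeasurableSpace β]
    (μ : Measure Ω) (X : Ω → ℝ) (W : Ω → β) : ℝ :=
  (1 - ∫ ω, |condMean μ X W ω| ∂μ) / 2

/-- Minimum mean squared error of estimating `X` from `W`. -/
def mmse {Ω β : Type*} [MeasurableSpace Ω] [MeasurableSpace β]
    (μ : Measure Ω) (X : Ω → ℝ) (W : Ω → β) : ℝ :=
  ∫ ω, (X ω - condMean μ X W ω) ^ 2 ∂μ

/-- Uniform distribution on `{-1, 1} ⊆ ℝ`. -/
def signMeasure : Measure ℝ := (2 : ENNReal)⁻¹ • (Measure.dirac (-1) + Measure.dirac 1)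

/-- Capacity of the BMS channel (in multiplicative-noise form) with noise law `PZ`:
`C = 1 - E[h_b((1 + E[X_u | Y_u])/2)]` where `X_u` is uniform on `{±1}`, independent of
`Z₀ ~ PZ`, and `Y_u = X_u · Z₀`. -/
def capacity (PZ : Measure ℝ) : ℝ :=
  1 - ∫ p, hb ((1 + condMean (signMeasure.prod PZ)
        (fun q : ℝ × ℝ => q.1) (fun q : ℝ × ℝ => q.1 * q.2) p) / 2) ∂(signMeasure.prod PZ)

/-- Evaluation vector of the multilinear polynomial whose coefficients on monomials
of degree at most `r` are given by `α` (higher-degree coefficients being ignored),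
evaluated at the point `v ∈ 𝔽₂^m` with index `i = Σ_j v_j 2^j`. -/
def RMword (r m : ℕ) (α : Finset (Fin m) → ZMod 2) : Fin (2 ^ m) → ZMod 2 :=
  fun i => ∑ S ∈ Finset.univ.filter (fun S : Finset (Fin m) => S.card ≤ r),
    α S * ∏ j ∈ S, ((((i : ℕ) / 2 ^ (j : ℕ)) % 2 : ℕ) : ZMod 2)

/-- The Reed–Muller code RM(r, m) ⊆ 𝔽₂^{2^m}. -/
def RMcode (r m : ℕ) : Finset (Fin (2 ^ m) → ZMod 2) :=
  Finset.image (RMword r m) Finset.univ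

/-- The rate `R(r,m)` of RM(r,m). -/
def RMrate (r m : ℕ) : ℝ := (2 ^ m : ℝ)⁻¹ * ∑ i ∈ Finset.range (r + 1), (m.choose i : ℝ)

/-- BPSK modulation map `c ↦ ((-1)^{c_0}, …, (-1)^{c_{N-1}})`. -/
def bpsk {N : ℕ} (c : Fin N → ZMod 2) : Fin N → ℝ := fun i => (-1 : ℝ) ^ ((c i).val)

/-- BPSK image of a binary code. -/
def bpskImage {N : ℕ} (C : Finset (Fin N → ZMod 2)) : Finset (Fin N → ℝ) :=
  letI := Classical.decEq (Fin N → ℝ)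
  C.image bpsk

/-- BPSK image of RM(r,m). -/
def bpskRM (r m : ℕ) : Finset (Fin (2 ^ m) → ℝ) := bpskImage (RMcode r m)

/-- Uniform probability measure on a finite set. -/
def uniformOnFinset {α : Type*} [MeasurableSpace α] (s : Finset α) : Measure α :=
  (s.card : ENNReal)⁻¹ • ∑ x ∈ s, Measure.dirac x

/-- `ρ(m) = (6 ln m + 34)/(5 √m)`. -/
def rho (m : ℕ) : ℝ := (6 * Real.log m + 34) / (5 * Real.sqrt m)

/-- Inverse of the binary entropy function restricted to `[0, 1/2]`. -/
def hbInv (u : ℝ) : ℝ := sSup {p : ℝ | p ∈ Set.Icc (0 : ℝ) (1 / 2) ∧ hb p ≤ u}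

/-- `ψ(u) = 1 - (1 - 2 h_b^{-1}(u))²`. -/
def psi (u : ℝ) : ℝ := 1 - (1 - 2 * hbInv u) ^ 2

/-- `Ψ(u) = ∫₀^u ψ(v) dv`. -/
def PsiInt (u : ℝ) : ℝ := ∫ v in (0 : ℝ)..u, psi v

/-- The coefficients `c_k = 1/(ln 2 · 2k (2k-1))`. -/
def ck (k : ℕ) : ℝ := 1 / (Real.log 2 * (2 * k) * (2 * k - 1))

/-- The channel moments `q_k = E[(E[X_u | Y_u])^{2k}]` for uniform input. -/
def qmom (PZ : Measure ℝ) (k : ℕ) : ℝ :=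
  ∫ p, (condMean (signMeasure.prod PZ)
      (fun q : ℝ × ℝ => q.1) (fun q : ℝ × ℝ => q.1 * q.2) p) ^ (2 * k) ∂(signMeasure.prod PZ)

end

section Aux

open MeasureTheory

lemma bpsk_add {N : ℕ} (c c' : Fin N → ZMod 2) : bpsk (c + c') = bpsk c * bpsk c' := by
  funext j
  have h : ∀ a : ZMod 2, a = 0 ∨ a = 1 := by decide
  show (-1:ℝ) ^ ((c j + c' j).val) = (-1:ℝ) ^ (c j).val * (-1:ℝ) ^ (c' j).val
  rcases h (c j) with h1 | h1 <;> rcases h (c' j) with h2 | h2 <;>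
    rw [h1, h2] <;>
    norm_num [show ((0:ZMod 2)).val = 0 from rfl, show ((1:ZMod 2)).val = 1 from rfl,
      show ((1+1:ZMod 2)).val = 0 by decide, show ((2:ZMod 2)).val = 0 by decide]

lemma bpsk_sq {N : ℕ} {C : Finset (Fin N → ZMod 2)} {x : Fin N → ℝ}
    (hx : x ∈ bpskImage C) : ∀ j, x j * x j = 1 := by
  classical
  obtain ⟨c, -, rfl⟩ := (@Finset.mem_image _ _ (Classical.decEq _) bpsk C x).1 hx
  intro j
  show (-1:ℝ) ^ ((c j).val) * (-1:ℝ) ^ ((c j).val) = 1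
  rw [← mul_pow]
  norm_num

lemma bpsk_mul_mem {N : ℕ} {C : Finset (Fin N → ZMod 2)}
    (hadd : ∀ u ∈ C, ∀ v ∈ C, u + v ∈ C) {x a : Fin N → ℝ}
    (hx : x ∈ bpskImage C) (ha : a ∈ bpskImage C) : x * a ∈ bpskImage C := by
  classical
  obtain ⟨c, hc, rfl⟩ := (@Finset.mem_image _ _ (Classical.decEq _) bpsk C x).1 hx
  obtain ⟨c', hc', rfl⟩ := (@Finset.mem_image _ _ (Classical.decEq _) bpsk C a).1 ha
  exact (@Finset.mem_image _ _ (Classical.decEq _) bpsk C _).2 ⟨c + c', hadd c hc c' hc', bpsk_add c c'⟩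

lemma map_sum_dirac {α β : Type*} [MeasurableSpace α] [MeasurableSpace β]
    (s : Finset α) {m : α → β} (hm : Measurable m) :
    Measure.map m (∑ a ∈ s, Measure.dirac a) = ∑ a ∈ s, Measure.dirac (m a) := by
  classical
  induction s using Finset.induction_on with
  | empty => simp
  | insert a s hnot ih =>
      rw [Finset.sum_insert hnot, Finset.sum_insert hnot, Measure.map_add _ _ hm,
        Measure.map_dirac' hm, ih]

lemma map_uniformOnFinset {α : Type*} [MeasurableSpace α] (s : Finset α) {m : α → α}
    (hm : Measurable m) (hmem : ∀ a ∈ s, m a ∈ s) (hinv : ∀ a ∈ s, m (m a) = a) :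
    Measure.map m (uniformOnFinset s) = uniformOnFinset s := by
  rw [uniformOnFinset, Measure.map_smul, map_sum_dirac s hm]
  congr 1
  exact Finset.sum_nbij' m m hmem hmem hinv hinv (fun a _ => rfl)

end Aux

/-- For a binary linear code with BPSK image `C_x`, input `X` uniform on
`C_x`, and a BMS channel `Y = X ⊙ Z` with independent noise components, the conditional
mean `f(Y_S) = E[X_i | Y_S]` satisfies `f(Y_S) = x_i · f(x_S ⊙ Y_S)` a.s. for every
codeword `x ∈ C_x`, and in particular `f(Y_S) = X_i · f(Z_S)` a.s. -/

theorem stmt_11 {Ω : Type*} [MeasurableSpace Ω] (μ : Measure Ω) [IsProbabilityMeasure μ]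
    (N : ℕ) (C : Finset (Fin N → ZMod 2))
    (h0 : (0 : Fin N → ZMod 2) ∈ C)
    (hadd : ∀ u ∈ C, ∀ v ∈ C, u + v ∈ C)
    (X Z : Ω → (Fin N → ℝ)) (hX : Measurable X) (hZ : Measurable Z)
    (hlaw : Measure.map (fun ω => (X ω, Z ω)) μ
        = (uniformOnFinset (bpskImage C)).prod
            (Measure.pi fun i => Measure.map (fun ω => Z ω i) μ))
    (i : Fin N) (S : Finset (Fin N))
    (f : ({x // x ∈ S} → ℝ) → ℝ) (hf : Measurable f)
    (hcond : (fun ω => f (fun j => X ω j.1 * Z ω j.1)) =ᵐ[μ]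
        condMean μ (fun ω => X ω i)
          (fun ω => fun j : {x // x ∈ S} => X ω j.1 * Z ω j.1)) :
    (∀ x ∈ bpskImage C,
        (fun ω => f (fun j => X ω j.1 * Z ω j.1)) =ᵐ[μ]
          fun ω => x i * f (fun j => x j.1 * (X ω j.1 * Z ω j.1)))
    ∧ (fun ω => f (fun j => X ω j.1 * Z ω j.1)) =ᵐ[μ]
        fun ω => X ω i * f (fun j => Z ω j.1) := by
  classical
  set s : Finset (Fin N → ℝ) := bpskImage C with hsdef
  have hs0 : bpsk 0 ∈ s := (@Finset.mem_image _ _ (Classical.decEq _) bpsk C _).2 ⟨0, h0, rfl⟩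
  simp only [condMean] at hcond
  set W : Ω → ({x // x ∈ S} → ℝ) :=
    fun ω => fun j : {x // x ∈ S} => X ω j.1 * Z ω j.1 with hWdef
  have hWm : Measurable W := measurable_pi_lambda _ fun j =>
    ((measurable_pi_apply j.1).comp hX).mul ((measurable_pi_apply j.1).comp hZ)
  have hm := hWm.comap_le
  haveI : SigmaFinite (μ.trim hm) := by
    haveI : IsFiniteMeasure (μ.trim hm) := isFiniteMeasure_trim hm
    infer_instance
  set piZ : Measure (Fin N → ℝ) := Measure.pi fun i => Measure.map (fun ω => Z ω i) μ
    with hpiZ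
  haveI hZp : ∀ i : Fin N, IsProbabilityMeasure (Measure.map (fun ω => Z ω i) μ) :=
    fun i => Measure.isProbabilityMeasure_map ((measurable_pi_apply i).comp hZ).aemeasurable
  haveI hpiZprob : IsProbabilityMeasure piZ := by rw [hpiZ]; infer_instance
  haveI hUprob : IsProbabilityMeasure (uniformOnFinset s) := by
    constructor
    simp only [uniformOnFinset]
    rw [Measure.smul_apply, Measure.finset_sum_apply]
    simp only [measure_univ, Finset.sum_const, nsmul_eq_mul, mul_one, smul_eq_mul]
    exact ENNReal.inv_mul_cancel (by exact_mod_cast Finset.card_ne_zero_of_mem hs0)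
      (ENNReal.natCast_ne_top _)
  set ν : Measure ((Fin N → ℝ) × (Fin N → ℝ)) := (uniformOnFinset s).prod piZ with hν
  haveI : IsProbabilityMeasure ν := by rw [hν]; infer_instance
  have hXZm : Measurable fun ω => (X ω, Z ω) := hX.prodMk hZ
  have key : ∀ G : (Fin N → ℝ) × (Fin N → ℝ) → ℝ, Measurable G →
      ∫ p, G p ∂ν = ∫ ω, G (X ω, Z ω) ∂μ := by
    intro G hG
    rw [← hlaw]
    exact integral_map hXZm.aemeasurable hG.aestronglyMeasurable
  -- a.e. membership of X in s
  have hmapX : Measure.map X μ = uniformOnFinset s := by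
    have h1 : (Measure.map (fun ω => (X ω, Z ω)) μ).map Prod.fst = Measure.map X μ :=
      Measure.map_map measurable_fst hXZm
    rw [← h1, hlaw, Measure.map_fst_prod, measure_univ, one_smul]
  have hsmeas : MeasurableSet (↑s : Set (Fin N → ℝ)) := s.finite_toSet.measurableSet
  have hXmem : ∀ᵐ ω ∂μ, X ω ∈ s := by
    rw [ae_iff]
    have he : {ω | ¬ X ω ∈ s} = X ⁻¹' (↑s : Set (Fin N → ℝ))ᶜ := rfl
    rw [he, ← Measure.map_apply hX hsmeas.compl, hmapX]
    simp only [uniformOnFinset]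
    rw [Measure.smul_apply, Measure.finset_sum_apply]
    rw [Finset.sum_eq_zero, smul_eq_mul, mul_zero]
    intro a ha
    rw [Measure.dirac_apply' _ hsmeas.compl]
    simp [Set.indicator_apply, ha]
  have hIntXi : Integrable (fun ω => X ω i) μ := by
    refine Integrable.mono' (integrable_const 1)
      ((measurable_pi_apply i).comp hX).aestronglyMeasurable ?_
    filter_upwards [hXmem] with ω hω
    have h2 := bpsk_sq (C := C) hω i
    rw [Real.norm_eq_abs, abs_le]
    constructor <;> nlinarith [h2]
  have hintfW : Integrable (fun ω => f (W ω)) μ := integrable_condExp.congr hcond.symm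
  -- the L1 identity
  have L1 : ∀ B : Set ({x // x ∈ S} → ℝ), MeasurableSet B →
      ∫ ω, Set.indicator B (fun _ => (1:ℝ)) (W ω) * f (W ω) ∂μ
        = ∫ ω, Set.indicator B (fun _ => (1:ℝ)) (W ω) * X ω i ∂μ := by
    intro B hB
    have hpre : MeasurableSet[MeasurableSpace.comap W inferInstance] (W ⁻¹' B) := ⟨B, hB, rfl⟩
    have hind : ∀ h : Ω → ℝ, ∫ ω, Set.indicator B (fun _ => (1:ℝ)) (W ω) * h ω ∂μ
        = ∫ ω in W ⁻¹' B, h ω ∂μ := by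
      intro h
      rw [← integral_indicator (hWm hB)]
      congr 1; funext ω
      by_cases hω : W ω ∈ B <;> simp [Set.indicator_apply, hω]
    rw [hind, hind]
    calc ∫ ω in W ⁻¹' B, f (W ω) ∂μ
        = ∫ ω in W ⁻¹' B, (μ[fun ω => X ω i|MeasurableSpace.comap W inferInstance]) ω ∂μ :=
          setIntegral_congr_ae (hm _ hpre) (hcond.mono fun ω hω _ => hω)
      _ = ∫ ω in W ⁻¹' B, X ω i ∂μ := setIntegral_condExp hm hIntXi hpre
  -- main statement for a fixed codeword x
  have main : ∀ x ∈ s, (fun ω => f (W ω)) =ᵐ[μ]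
      fun ω => x i * f (fun j : {x // x ∈ S} => x j.1 * W ω j) := by
    intro x hx
    have hx2 : ∀ j, x j * x j = 1 := bpsk_sq hx
    set Φ : (Fin N → ℝ) × (Fin N → ℝ) → (Fin N → ℝ) × (Fin N → ℝ) :=
      Prod.map (fun a => x * a) id with hΦdef
    have hxmul : Measurable fun a : Fin N → ℝ => x * a :=
      measurable_pi_lambda _ fun j => by simpa only [Pi.mul_apply] using (Measurable.const_mul (f := fun c : Fin N → ℝ => c j) (measurable_pi_apply j) (x j))
    have hΦm : Measurable Φ := (hxmul.comp measurable_fst).prodMk measurable_snd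
    have hmp : Measure.map Φ ν = ν := by
      have h1 : Measure.map (fun a => x * a) (uniformOnFinset s) = uniformOnFinset s :=
        map_uniformOnFinset s hxmul (fun a ha => bpsk_mul_mem hadd hx ha)
          (fun a _ => by
            funext j
            show x j * (x j * a j) = a j
            rw [← mul_assoc, hx2 j, one_mul])
      exact (MeasurePreserving.prod (f := fun a => x * a) (g := id)
        ⟨hxmul, h1⟩ (MeasurePreserving.id piZ)).map_eq
    have hinv : ∀ G : (Fin N → ℝ) × (Fin N → ℝ) → ℝ, Measurable G →
        ∫ p, G p ∂ν = ∫ p, G (Φ p) ∂ν := by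
      intro G hG
      conv_lhs => rw [← hmp]
      exact integral_map hΦm.aemeasurable hG.aestronglyMeasurable
    set w : (Fin N → ℝ) × (Fin N → ℝ) → ({x // x ∈ S} → ℝ) :=
      fun p => fun j : {x // x ∈ S} => p.1 j.1 * p.2 j.1 with hwdef
    have hwm : Measurable w := measurable_pi_lambda _ fun j =>
      ((measurable_pi_apply j.1).comp measurable_fst).mul
        ((measurable_pi_apply j.1).comp measurable_snd)
    set mβ : ({x // x ∈ S} → ℝ) → ({x // x ∈ S} → ℝ) :=
      fun y => fun j : {x // x ∈ S} => x j.1 * y j with hmβdef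
    have hmβm : Measurable mβ :=
      measurable_pi_lambda _ fun j => (measurable_pi_apply j).const_mul _
    have hmβinv : ∀ y, mβ (mβ y) = y := fun y => funext fun j => by
      show x j.1 * (x j.1 * y j) = y j
      rw [← mul_assoc, hx2 j.1, one_mul]
    have hwΦ : ∀ p, w (Φ p) = mβ (w p) := by
      intro p
      funext j
      show (x * p.1) j.1 * p.2 j.1 = x j.1 * (p.1 j.1 * p.2 j.1)
      rw [Pi.mul_apply, mul_assoc]
    -- integrability of the candidate function
    have hmapeq : Measure.map (fun ω => mβ (W ω)) μ = Measure.map W μ := by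
      have e1 : Measure.map W μ = Measure.map w ν := by
        rw [← hlaw]
        exact (Measure.map_map hwm hXZm).symm
      have e2 : Measure.map (fun ω => mβ (W ω)) μ = Measure.map (fun p => mβ (w p)) ν := by
        rw [← hlaw]
        exact (Measure.map_map (hmβm.comp hwm) hXZm).symm
      have e3 : Measure.map (fun p => mβ (w p)) ν = Measure.map w ν := by
        have : (fun p => mβ (w p)) = w ∘ Φ := by funext p; rw [Function.comp_apply, hwΦ p]
        rw [this, ← Measure.map_map hwm hΦm, hmp]
      rw [e1, e2, e3]
    have hintf2 : Integrable (fun ω => f (mβ (W ω))) μ := by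
      have h1 : Integrable f (Measure.map W μ) :=
        (integrable_map_measure hf.aestronglyMeasurable hWm.aemeasurable).2 hintfW
      rw [← hmapeq] at h1
      exact (integrable_map_measure hf.aestronglyMeasurable
        (hmβm.comp hWm).aemeasurable).1 h1
    have hintg : Integrable (fun ω => x i * f (mβ (W ω))) μ := hintf2.const_mul _
    -- set-integral identity
    have hg_eq : ∀ t : Set Ω, MeasurableSet[MeasurableSpace.comap W inferInstance] t → μ t < ⊤ →
        ∫ ω in t, (x i * f (mβ (W ω))) ∂μ = ∫ ω in t, X ω i ∂μ := by
      intro t ht _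
      obtain ⟨A, hA, rfl⟩ := ht
      set χA : ({x // x ∈ S} → ℝ) → ℝ := Set.indicator A (fun _ => (1:ℝ)) with hχA
      have hχAm : Measurable χA := measurable_const.indicator hA
      set B : Set ({x // x ∈ S} → ℝ) := mβ ⁻¹' A with hBdef
      have hBm : MeasurableSet B := hmβm hA
      set χB : ({x // x ∈ S} → ℝ) → ℝ := Set.indicator B (fun _ => (1:ℝ)) with hχB
      have hχBm : Measurable χB := measurable_const.indicator hBm
      have hχBA : ∀ y, χB y = χA (mβ y) := by
        intro y
        by_cases hy : y ∈ B
        · have hy' : mβ y ∈ A := hy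
          simp [hχB, hχA, Set.indicator_apply, hy, hy']
        · have hy' : ¬ mβ y ∈ A := hy
          simp [hχB, hχA, Set.indicator_apply, hy, hy']
      have hind : ∀ h : Ω → ℝ, ∫ ω in W ⁻¹' A, h ω ∂μ = ∫ ω, χA (W ω) * h ω ∂μ := by
        intro h
        rw [← integral_indicator (hWm hA)]
        congr 1; funext ω
        by_cases hω : W ω ∈ A <;> simp [hχA, Set.indicator_apply, hω]
      rw [hind, hind]
      have m1 : Measurable fun p : (Fin N → ℝ) × (Fin N → ℝ) =>
          χA (w p) * (x i * f (mβ (w p))) :=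
        (hχAm.comp hwm).mul ((hf.comp (hmβm.comp hwm)).const_mul _)
      have m2 : Measurable fun p : (Fin N → ℝ) × (Fin N → ℝ) => χB (w p) * f (w p) :=
        (hχBm.comp hwm).mul (hf.comp hwm)
      have m3 : Measurable fun p : (Fin N → ℝ) × (Fin N → ℝ) => χB (w p) * p.1 i :=
        (hχBm.comp hwm).mul ((measurable_pi_apply i).comp measurable_fst)
      have m4 : Measurable fun p : (Fin N → ℝ) × (Fin N → ℝ) => χA (w p) * p.1 i :=
        (hχAm.comp hwm).mul ((measurable_pi_apply i).comp measurable_fst)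
      calc ∫ ω, χA (W ω) * (x i * f (mβ (W ω))) ∂μ
          = ∫ p, χA (w p) * (x i * f (mβ (w p))) ∂ν := (key _ m1).symm
        _ = ∫ p, χA (w (Φ p)) * (x i * f (mβ (w (Φ p)))) ∂ν := hinv _ m1
        _ = ∫ p, x i * (χB (w p) * f (w p)) ∂ν := by
            congr 1
            funext p
            rw [hwΦ p, hmβinv (w p), ← hχBA (w p)]
            ring
        _ = x i * ∫ p, χB (w p) * f (w p) ∂ν := integral_const_mul _ _
        _ = x i * ∫ ω, χB (W ω) * f (W ω) ∂μ := congrArg _ (key _ m2)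
        _ = x i * ∫ ω, χB (W ω) * X ω i ∂μ := congrArg _ (L1 B hBm)
        _ = x i * ∫ p, χB (w p) * p.1 i ∂ν := congrArg _ (key _ m3).symm
        _ = x i * ∫ p, χB (w (Φ p)) * (Φ p).1 i ∂ν := congrArg _ (hinv _ m3)
        _ = x i * ∫ p, x i * (χA (w p) * p.1 i) ∂ν := by
            refine congrArg _ ?_
            congr 1
            funext p
            have e4 : χB (w (Φ p)) = χA (w p) := by
              rw [hχBA, hwΦ p, hmβinv (w p)]
            rw [e4]
            show χA (w p) * ((x * p.1) i) = x i * (χA (w p) * p.1 i)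
            show χA (w p) * (x i * p.1 i) = x i * (χA (w p) * p.1 i)
            ring
        _ = x i * (x i * ∫ p, χA (w p) * p.1 i ∂ν) := congrArg _ (integral_const_mul _ _)
        _ = ∫ p, χA (w p) * p.1 i ∂ν := by rw [← mul_assoc, hx2 i, one_mul]
        _ = ∫ ω, χA (W ω) * X ω i ∂μ := key _ m4
    have hgm : AEStronglyMeasurable[MeasurableSpace.comap W inferInstance]
        (fun ω => x i * f (mβ (W ω))) μ := by
      refine ⟨fun ω => x i * f (mβ (W ω)), ?_, Filter.EventuallyEq.rfl⟩
      have hWm' : Measurable[MeasurableSpace.comap W inferInstance] W := Measurable.of_comap_le le_rfl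
      exact (((hf.comp hmβm).comp hWm').const_mul (x i)).stronglyMeasurable
    have hfin := ae_eq_condExp_of_forall_setIntegral_eq (μ := μ) hm hIntXi
      (fun t _ _ => hintg.integrableOn) hg_eq hgm
    exact hcond.trans hfin.symm
  refine ⟨main, ?_⟩
  have hall : ∀ᵐ ω ∂μ, ∀ x ∈ s, f (W ω) = x i * f (fun j : {x // x ∈ S} => x j.1 * W ω j) :=
    (Filter.eventually_all_finset s).2 fun x hx => main x hx
  filter_upwards [hall, hXmem] with ω h1 h2
  have h3 := h1 (X ω) h2
  have h4 : (fun j : {x // x ∈ S} => X ω j.1 * W ω j) = fun j : {x // x ∈ S} => Z ω j.1 := by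
    funext j
    show X ω j.1 * (X ω j.1 * Z ω j.1) = Z ω j.1
    rw [← mul_assoc, bpsk_sq h2 j.1, one_mul]
  rw [h4] at h3
  exact h3
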